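/- Let C_n be the cycle graph on [n] and let S ∈ min(C_n) with |S| ≥ 3, whose complement decomposes into intervals I_1,...,I_k (k = |S|) with I_j = [a_j, b_j] and a_{j+1} = b_j + 2 cyclically. Let A be a collection of subsets of [n] of size 1 or 2, each disjoint from the dependent sets of M(S) (i.e., each element of A is either a singleton {x} with x ∉ S, or a pair {u,v} with u,v in different intervals and u,v ∉ S). Then A is a transversal of the collection {D(M(S'))\D(M(S)) : S' ∈ min(C_n)\{S}} if and only if: (i) the union of the elements of A equals [n]\S, and (ii) for each j ∈ [k] there exist u ∈ I_j and w ∈ I_{j+1} with {u,w} ∈ A. -/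

import Mathlib

open MvPolynomial

variable {n : ℕ}

/-- Number of connected components of the subgraph of `G` induced on `T`. -/
noncomputable def numComp (G : SimpleGraph (Fin n)) (T : Set (Fin n)) : ℕ :=
  Nat.card (G.induce T).ConnectedComponent

/-- `a` and `b` lie in the same connected component of the subgraph induced on `T`. -/
def SameComp (G : SimpleGraph (Fin n)) (T : Set (Fin n)) (a b : Fin n) : Prop :=
  ∃ (ha : a ∈ T) (hb : b ∈ T), (G.induce T).Reachable ⟨a, ha⟩ ⟨b, hb⟩

/-- `S` is a minimal `k`-cut of `G`. -/
def IsMinKCut (G : SimpleGraph (Fin n)) (S : Set (Fin n)) (k : ℕ) : Prop :=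
  S.Nonempty ∧ S ≠ Set.univ ∧ numComp G Sᶜ = k ∧
    ∀ i ∈ S, numComp G (Sᶜ ∪ {i}) < numComp G Sᶜ

/-- The collection `min(G)`: all minimal `k`-cuts (`k ≥ 2`) together with `∅`. -/
def minSet (G : SimpleGraph (Fin n)) : Set (Set (Fin n)) :=
  {S | S = ∅ ∨ ∃ k, 2 ≤ k ∧ IsMinKCut G S k}

/-- `A` is a connected dominating set of the subgraph of `G` induced on `T`. -/
def ConnDom (G : SimpleGraph (Fin n)) (T A : Set (Fin n)) : Prop :=
  A ⊆ T ∧ (G.induce A).Connected ∧ ∀ v ∈ T, v ∉ A → ∃ a ∈ A, G.Adj v a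

/-- The polynomial ring `K[x_1,…,x_n,y_1,…,y_n]` over `ℂ`. -/
abbrev PolyRing (n : ℕ) := MvPolynomial (Fin n ⊕ Fin n) ℂ

/-- The binomial `f_{i,j} = x_i y_j − x_j y_i`. -/
noncomputable def fij (i j : Fin n) : PolyRing n :=
  X (Sum.inl i) * X (Sum.inr j) - X (Sum.inl j) * X (Sum.inr i)

/-- The binomial edge ideal of a graph. -/
noncomputable def beIdeal (G : SimpleGraph (Fin n)) : Ideal (PolyRing n) :=
  Ideal.span {g | ∃ i j, G.Adj i j ∧ g = fij i j}

/-- Localized v-number of `I` at `p`. -/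
noncomputable def vAt (I p : Ideal (PolyRing n)) : ℕ :=
  sInf {d | ∃ f : PolyRing n, f.IsHomogeneous d ∧ Submodule.colon I (Ideal.span {f}) = p}

/-- v-number of `I`. -/
noncomputable def vNum (I : Ideal (PolyRing n)) : ℕ :=
  sInf {d | ∃ f : PolyRing n, f.IsHomogeneous d ∧ (Submodule.colon I (Ideal.span {f})).IsPrime}

/-- The graph which is the disjoint union of complete graphs on the connected
components of the subgraph of `G` induced on `Sᶜ`. -/
def tildeG (G : SimpleGraph (Fin n)) (S : Set (Fin n)) : SimpleGraph (Fin n) :=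
  SimpleGraph.fromRel (fun a b => SameComp G Sᶜ a b)

/-- The minimal prime `P_S` of the binomial edge ideal. -/
noncomputable def primePS (G : SimpleGraph (Fin n)) (S : Set (Fin n)) : Ideal (PolyRing n) :=
  Ideal.span (({g | ∃ i ∈ S, g = X (Sum.inl i)} ∪ {g | ∃ i ∈ S, g = X (Sum.inr i)} : Set (PolyRing n)))
    ⊔ beIdeal (tildeG G S)

/-- `B` is a dependent set of the rank-≤2 matroid `M(S)`. -/
def depM (G : SimpleGraph (Fin n)) (S : Set (Fin n)) (B : Set (Fin n)) : Prop :=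
  (B ∩ S).Nonempty ∨ (∃ a b, a ∈ B ∧ b ∈ B ∧ a ≠ b ∧ SameComp G Sᶜ a b) ∨ 3 ≤ B.ncard

/-- `A` is a transversal of `{D(M(S'))\D(M(S)) : S' ∈ min(G)\{S}}` consisting of
singletons and pairs outside `D(M(S))`. -/
def IsTransversal (G : SimpleGraph (Fin n)) (S : Set (Fin n))
    (A : Finset (Finset (Fin n))) : Prop :=
  (∀ e ∈ A, e.card = 1 ∨ e.card = 2) ∧ (∀ e ∈ A, ¬ depM G S ↑e) ∧
    ∀ S' ∈ minSet G, S' ≠ S → ∃ e ∈ A, depM G S' ↑e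

/-- The singletons of `A`, viewed as a subset of `[n]`. -/
def A1set (A : Finset (Finset (Fin n))) : Finset (Fin n) :=
  (A.filter fun e => e.card = 1).biUnion id

/-- The pairs of `A`. -/
def A2set (A : Finset (Finset (Fin n))) : Finset (Finset (Fin n)) :=
  A.filter fun e => e.card = 2

/-- The binomial attached to an unordered pair. -/
noncomputable def fPair (e : Finset (Fin n)) : PolyRing n :=
  if h : e.Nonempty then fij (e.min' h) (e.max' h) else 1

/-- The generator `g_{A,C,D}`. -/
noncomputable def gPoly (A : Finset (Finset (Fin n))) (C D : Finset (Fin n)) : PolyRing n :=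
  (∏ k ∈ C, X (Sum.inl k)) * (∏ k ∈ D, X (Sum.inr k)) * ∏ e ∈ A2set A, fPair e

/-- The cycle graph on `[n]`. -/
def cycG (n : ℕ) [NeZero n] : SimpleGraph (Fin n) :=
  SimpleGraph.fromRel (fun i j => j = i + 1)

/-- The connected domination number of `G`. -/
noncomputable def gammaC (G : SimpleGraph (Fin n)) : ℕ :=
  sInf {k | ∃ A : Set (Fin n), ConnDom G Set.univ A ∧ A.ncard = k}

/-- `S'` is nice with respect to the components `V1`, `V2`. -/
def Nice (G : SimpleGraph (Fin n)) (V1 V2 S' : Set (Fin n)) : Prop :=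
  ¬ ∃ i j, i ∈ V1 \ S' ∧ j ∈ V2 \ S' ∧ SameComp G S'ᶜ i j

/-- `V1`, `V2` are the vertex sets of the two connected components of the
subgraph induced on `Sᶜ`. -/
def ComponentsOf (G : SimpleGraph (Fin n)) (S V1 V2 : Set (Fin n)) : Prop :=
  V1 ∪ V2 = Sᶜ ∧ Disjoint V1 V2 ∧ V1.Nonempty ∧ V2.Nonempty ∧
    (∀ a ∈ V1, ∀ b ∈ V1, SameComp G Sᶜ a b) ∧
    (∀ a ∈ V2, ∀ b ∈ V2, SameComp G Sᶜ a b) ∧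
    ∀ a ∈ V1, ∀ b ∈ V2, ¬ SameComp G Sᶜ a b

/-- Significance index of a variable: `x_1 > ⋯ > x_n > y_1 > ⋯ > y_n`. -/
def sigIdx (n : ℕ) : Fin n ⊕ Fin n → ℕ := Sum.elim (fun i => (i : ℕ)) (fun i => n + i)

/-- Lexicographic comparison of exponent vectors. -/
def lexLt (n : ℕ) (a b : (Fin n ⊕ Fin n) →₀ ℕ) : Prop :=
  ∃ v, a v < b v ∧ ∀ w, sigIdx n w < sigIdx n v → a w = b w

/-- `m` is the leading (lex-largest) exponent of `f`. -/
def IsLeadExp (n : ℕ) (f : PolyRing n) (m : (Fin n ⊕ Fin n) →₀ ℕ) : Prop :=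
  m ∈ f.support ∧ ∀ m' ∈ f.support, m' ≠ m → lexLt n m' m

/-- The initial ideal of `I` with respect to the lexicographic order. -/
noncomputable def inIdeal (I : Ideal (PolyRing n)) : Ideal (PolyRing n) :=
  Ideal.span {g | ∃ f ∈ I, ∃ m, IsLeadExp n f m ∧ g = monomial m 1}

/-- A permutation `σ` of `[n]` is `S`-consistent (for `S` an independent set of
the cycle `C_n`). -/
def SConsistent (n : ℕ) [NeZero n] (S : Set (Fin n)) (σ : Equiv.Perm (Fin n)) : Prop :=
  (∀ x : Fin n, x ∉ S → x + 1 ∈ S →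
    ((σ x < σ (x + 2) → x + 3 ∉ S → σ (x + 2) < σ (x + 3)) ∧
     (σ x < σ (x + 2) → x - 1 ∉ S → σ (x - 1) < σ x) ∧
     (σ (x + 2) < σ x → x + 3 ∉ S → σ (x + 3) < σ (x + 2)) ∧
     (σ (x + 2) < σ x → x - 1 ∉ S → σ x < σ (x - 1)))) ∧
  (∀ y : Fin n, y - 1 ∉ S → y ∉ S → y + 1 ∉ S → (σ (y - 1) < σ y ↔ σ y < σ (y + 1)))


set_option linter.unusedSectionVars false
set_option linter.unusedVariables false
open Fin.NatCast Fin.CommRing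

section AuxStmt5
section Cyc
variable [NeZero n]

lemma cyc_adj {i j : Fin n} : (cycG n).Adj i j ↔ i ≠ j ∧ (j = i + 1 ∨ i = j + 1) := by
  simp [cycG, SimpleGraph.fromRel_adj]

def arcN (T : Set (Fin n)) (a : Fin n) (m : ℕ) : Prop := ∀ i ≤ m, a + (i : Fin n) ∈ T

def Rrel (T : Set (Fin n)) (a b : Fin n) : Prop :=
  a ∈ T ∧ b ∈ T ∧ ∃ m, m < n ∧
    ((a + (m : Fin n) = b ∧ arcN T a m) ∨ (b + (m : Fin n) = a ∧ arcN T b m))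

lemma fin1ne0 (hn : 3 ≤ n) : (1 : Fin n) ≠ 0 := by
  have h : ((1:ℕ) : Fin n).val = 1 := Fin.val_cast_of_lt (by omega)
  intro hh
  rw [show ((1:ℕ):Fin n) = (1:Fin n) by push_cast; rfl, hh] at h
  simp at h

lemma self_ne_add_one (hn : 3 ≤ n) (a : Fin n) : a ≠ a + 1 := by
  intro h
  have : a + 0 = a + 1 := by rw [add_zero]; exact h
  exact (fin1ne0 hn) (add_left_cancel this).symm

lemma Rrel_refl {T : Set (Fin n)} (hn : 3 ≤ n) {a : Fin n} (ha : a ∈ T) : Rrel T a a :=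
  ⟨ha, ha, 0, by omega, Or.inl ⟨by push_cast; ring, fun i hi => by
    interval_cases i; simpa using ha⟩⟩

lemma Rrel_step {T : Set (Fin n)} (hn : 3 ≤ n) {a c b : Fin n} (ha : a ∈ T)
    (hadj : c = a + 1 ∨ a = c + 1) (h : Rrel T c b) : Rrel T a b := by
  obtain ⟨hc, hb, m, hm, hcase⟩ := h
  rcases hadj with h1 | h1
  · rcases hcase with ⟨heq, harc⟩ | ⟨heq, harc⟩
    · -- c + m = b, forward; prepend a
      by_cases hmn : m + 1 < n
      · refine ⟨ha, hb, m + 1, hmn, Or.inl ⟨?_, ?_⟩⟩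
        · push_cast; rw [← heq, h1]; ring
        · intro i hi
          by_cases h0 : i = 0
          · subst h0; simpa using ha
          · obtain ⟨j, rfl⟩ : ∃ j, i = j + 1 := ⟨i - 1, by omega⟩
            rw [show a + ((j+1:ℕ):Fin n) = c + ((j:ℕ):Fin n) by push_cast; rw [h1]; ring]
            exact harc _ (by omega)
      · have hmn' : m + 1 = n := by omega
        have hba : b = a := by
          rw [← heq, h1]
          have h2 : ((m:Fin n) + 1 : Fin n) = 0 := by
            rw [show ((m : Fin n) + 1 : Fin n) = ((m+1 : ℕ) : Fin n) by push_cast; ring, hmn',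
              Fin.natCast_self]
          calc a + 1 + (m:Fin n) = a + ((m:Fin n)+1) := by ring
          _ = a := by rw [h2, add_zero]
        rw [hba]; exact Rrel_refl hn ha
    · -- b + m = c, backward
      by_cases h0 : m = 0
      · subst h0
        have hcb : c = b := by simpa using heq.symm
        refine ⟨ha, hb, 1, by omega, Or.inl ⟨by rw [← hcb, h1]; push_cast; ring, ?_⟩⟩
        intro i hi; interval_cases i
        · simpa using ha
        · rw [show a + ((1:ℕ):Fin n) = c by rw [h1]; push_cast; ring]; exact hc
      · obtain ⟨k, rfl⟩ : ∃ k, m = k + 1 := ⟨m - 1, by omega⟩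
        refine ⟨ha, hb, k, by omega, Or.inr ⟨?_, fun i hi => harc i (by omega)⟩⟩
        have h2 : b + ((k:ℕ) : Fin n) + 1 = a + 1 := by
          rw [← h1, ← heq]; push_cast; ring
        exact add_right_cancel h2
  · -- a = c + 1
    rcases hcase with ⟨heq, harc⟩ | ⟨heq, harc⟩
    · by_cases h0 : m = 0
      · subst h0
        have hcb : c = b := by simpa using heq
        refine ⟨ha, hb, 1, by omega, Or.inr ⟨by rw [← hcb, h1]; push_cast; ring, ?_⟩⟩
        intro i hi; interval_cases i
        · simpa using hb
        · rw [show b + ((1:ℕ):Fin n) = a by rw [h1, hcb]; push_cast; ring]; exact ha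
      · obtain ⟨k, rfl⟩ : ∃ k, m = k + 1 := ⟨m - 1, by omega⟩
        refine ⟨ha, hb, k, by omega, Or.inl ⟨?_, ?_⟩⟩
        · have h2 : a + ((k:ℕ) : Fin n) + 1 = b + 1 := by
            rw [← heq, h1]; push_cast; ring
          exact add_right_cancel h2
        · intro i hi
          rw [show a + ((i:ℕ):Fin n) = c + ((i+1 : ℕ) : Fin n) by push_cast; rw [h1]; ring]
          exact harc _ (by omega)
    · -- b + m = c, backward; extend to a = c + 1
      by_cases hmn : m + 1 < n
      · refine ⟨ha, hb, m + 1, hmn, Or.inr ⟨by push_cast; rw [h1, ← heq]; ring, ?_⟩⟩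
        intro i hi
        rcases Nat.lt_or_ge i (m+1) with h2 | h2
        · exact harc i (by omega)
        · have h3 : i = m + 1 := by omega
          subst h3
          rw [show b + ((m+1:ℕ):Fin n) = a by rw [h1, ← heq]; push_cast; ring]; exact ha
      · have hmn' : m + 1 = n := by omega
        have hab : a = b := by
          rw [h1, ← heq]
          have h2 : ((m:Fin n) + 1 : Fin n) = 0 := by
            rw [show ((m : Fin n) + 1 : Fin n) = ((m+1 : ℕ) : Fin n) by push_cast; ring, hmn',
              Fin.natCast_self]
          calc b + (m:Fin n) + 1 = b + ((m:Fin n)+1) := by ring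
          _ = b := by rw [h2, add_zero]
        rw [hab]; exact Rrel_refl hn hb

lemma reachable_of_arcN {T : Set (Fin n)} (hn : 3 ≤ n) :
    ∀ (m : ℕ) (a : Fin n), arcN T a m → ∀ (ha : a ∈ T) (hb : a + (m : Fin n) ∈ T),
    ((cycG n).induce T).Reachable ⟨a, ha⟩ ⟨a + (m:Fin n), hb⟩ := by
  intro m
  induction m with
  | zero =>
    intro a _ ha hb
    rw [show (⟨a + ((0:ℕ):Fin n), hb⟩ : T) = ⟨a, ha⟩ from Subtype.ext (by push_cast; ring)]
  | succ k ih =>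
    intro a harc ha hb
    have h1 : a + 1 ∈ T := by
      have := harc 1 (by omega); simpa using this
    have hadj : ((cycG n).induce T).Adj ⟨a, ha⟩ ⟨a + 1, h1⟩ := by
      rw [SimpleGraph.comap_adj]
      exact cyc_adj.mpr ⟨self_ne_add_one hn a, Or.inl rfl⟩
    have harc' : arcN T (a + 1) k := by
      intro i hi
      rw [show a + 1 + ((i:ℕ):Fin n) = a + ((i+1:ℕ):Fin n) by push_cast; ring]
      exact harc _ (by omega)
    have heq : (a+1) + ((k:ℕ):Fin n) = a + ((k+1:ℕ):Fin n) := by push_cast; ring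
    have hb' : (a+1) + ((k:ℕ):Fin n) ∈ T := by rw [heq]; exact hb
    have hr := ih (a+1) harc' h1 hb'
    rw [show (⟨a + ((k+1:ℕ):Fin n), hb⟩ : T) = ⟨(a+1) + ((k:ℕ):Fin n), hb'⟩ from
      Subtype.ext heq.symm]
    exact hadj.reachable.trans hr

lemma sameComp_iff_Rrel {T : Set (Fin n)} (hn : 3 ≤ n) {a b : Fin n} :
    SameComp (cycG n) T a b ↔ Rrel T a b := by
  constructor
  · rintro ⟨ha, hb, hr⟩
    obtain ⟨w⟩ := hr
    have key : ∀ (u v : T) (_ : ((cycG n).induce T).Walk u v), Rrel T ↑u ↑v := by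
      intro u v w
      induction w with
      | nil => exact Rrel_refl hn (Subtype.mem _)
      | cons h p ih =>
        rename_i x y z
        have hadj : (cycG n).Adj ↑x ↑y := h
        rw [cyc_adj] at hadj
        exact Rrel_step hn (Subtype.mem x) hadj.2 ih
    exact key _ _ w
  · rintro ⟨ha, hb, m, hm, hcase⟩
    rcases hcase with ⟨heq, harc⟩ | ⟨heq, harc⟩
    · refine ⟨ha, hb, ?_⟩
      have := reachable_of_arcN hn m a harc ha (heq ▸ hb)
      rw [show (⟨b, hb⟩ : T) = ⟨a + (m:Fin n), heq ▸ hb⟩ from Subtype.ext heq.symm]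
      exact this
    · refine ⟨ha, hb, ?_⟩
      have := reachable_of_arcN hn m b harc hb (heq ▸ ha)
      rw [show (⟨a, ha⟩ : T) = ⟨b + (m:Fin n), heq ▸ ha⟩ from Subtype.ext heq.symm]
      exact this.symm
end Cyc

section Part2
variable [NeZero n]

lemma sameComp_symm {G : SimpleGraph (Fin n)} {T : Set (Fin n)} {a b : Fin n}
    (h : SameComp G T a b) : SameComp G T b a := by
  obtain ⟨ha, hb, hr⟩ := h; exact ⟨hb, ha, hr.symm⟩

lemma sameComp_trans {G : SimpleGraph (Fin n)} {T : Set (Fin n)} {a b c : Fin n}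
    (h : SameComp G T a b) (h' : SameComp G T b c) : SameComp G T a c := by
  obtain ⟨ha, hb, hr⟩ := h; obtain ⟨hb', hc, hr'⟩ := h'
  exact ⟨ha, hc, hr.trans hr'⟩

lemma sameComp_mono (hn : 3 ≤ n) {T T' : Set (Fin n)} (hTT : T ⊆ T') {a b : Fin n}
    (h : SameComp (cycG n) T a b) : SameComp (cycG n) T' a b := by
  rw [sameComp_iff_Rrel hn] at h ⊢
  obtain ⟨ha, hb, m, hm, hcase⟩ := h
  exact ⟨hTT ha, hTT hb, m, hm, by
    rcases hcase with ⟨h1, h2⟩ | ⟨h1, h2⟩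
    · exact Or.inl ⟨h1, fun i hi => hTT (h2 i hi)⟩
    · exact Or.inr ⟨h1, fun i hi => hTT (h2 i hi)⟩⟩

/-- every vertex of T is connected to a "left endpoint" of its component -/
lemma exists_leftEnd (hn : 3 ≤ n) {T : Set (Fin n)} {z : Fin n} (hz : z ∉ T) :
    ∀ b ∈ T, ∃ a, a ∈ T ∧ a - 1 ∉ T ∧ SameComp (cycG n) T a b := by
  suffices key : ∀ (k : ℕ) (b : Fin n), b = z + (k : Fin n) → b ∈ T →
      ∃ a, a ∈ T ∧ a - 1 ∉ T ∧ SameComp (cycG n) T a b by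
    intro b hb
    refine key (b - z).val b ?_ hb
    rw [Fin.cast_val_eq_self]; ring
  intro k
  induction k with
  | zero => intro b hb0 hb; exfalso; apply hz; rw [show z = b by rw [hb0]; push_cast; ring]; exact hb
  | succ k ih =>
    intro b hb0 hb
    by_cases h1 : b - 1 ∈ T
    · obtain ⟨a, ha1, ha2, ha3⟩ := ih (b-1) (by rw [hb0]; push_cast; ring) h1
      refine ⟨a, ha1, ha2, sameComp_trans ha3 ?_⟩
      rw [sameComp_iff_Rrel hn]
      refine ⟨h1, hb, 1, by omega, Or.inl ⟨by push_cast; ring, ?_⟩⟩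
      intro i hi; interval_cases i
      · simpa using h1
      · rw [show b - 1 + ((1:ℕ):Fin n) = b by push_cast; ring]; exact hb
    · exact ⟨b, hb, h1, (sameComp_iff_Rrel hn).mpr (Rrel_refl hn hb)⟩

lemma numComp_eq_leftEnds (hn : 3 ≤ n) {T : Set (Fin n)} (hne : T.Nonempty)
    (hnu : T ≠ Set.univ) :
    numComp (cycG n) T = {a | a ∈ T ∧ a - 1 ∉ T}.ncard := by
  obtain ⟨z, hz⟩ : ∃ z, z ∉ T := by
    by_contra h; push_neg at h; exact hnu (Set.eq_univ_of_forall h)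
  rw [← Nat.card_coe_set_eq]
  refine (Nat.card_eq_of_bijective
    (fun p => ((cycG n).induce T).connectedComponentMk ⟨p.1, p.2.1⟩) ⟨?_, ?_⟩).symm
  · rintro ⟨a, ha, ha2⟩ ⟨a', ha', ha2'⟩ hmk
    simp only [SimpleGraph.ConnectedComponent.eq] at hmk
    have hsc : SameComp (cycG n) T a a' := ⟨ha, ha', hmk⟩
    rw [sameComp_iff_Rrel hn] at hsc
    obtain ⟨_, _, m, hm, hcase⟩ := hsc
    have haux : ∀ (x y : Fin n), x ∈ T → (y - 1 ∉ T) → ∀ mm, mm < n →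
        x + (mm : Fin n) = y → arcN T x mm → x = y := by
      intro x y hx hy2 mm hmm heq harc
      by_cases h0 : mm = 0
      · subst h0; rw [← heq]; push_cast; ring
      · exfalso; apply hy2
        obtain ⟨j, rfl⟩ : ∃ j, mm = j + 1 := ⟨mm - 1, by omega⟩
        have : x + ((j:ℕ) : Fin n) = y - 1 := by
          have : x + ((j:ℕ):Fin n) + 1 = y := by rw [← heq]; push_cast; ring
          rw [← this]; ring
        rw [← this]; exact harc j (by omega)
    rcases hcase with ⟨h1, h2⟩ | ⟨h1, h2⟩
    · exact Subtype.ext (haux a a' ha ha2' m hm h1 h2)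
    · exact Subtype.ext (haux a' a ha' ha2 m hm h1 h2).symm
  · intro c
    refine SimpleGraph.ConnectedComponent.ind (fun v => ?_) c
    obtain ⟨a, ha1, ha2, ha3⟩ := exists_leftEnd hn hz v.1 v.2
    refine ⟨⟨a, ha1, ha2⟩, ?_⟩
    obtain ⟨hx, hy, hr⟩ := ha3
    simp only [SimpleGraph.ConnectedComponent.eq]
    convert hr using 1
end Part2

section Part3
variable [NeZero n]

lemma add_one_inj' : Function.Injective (fun s : Fin n => s + 1) := by
  intro x y h; simpa using h

lemma minSet_of_indep (hn : 3 ≤ n) {S : Set (Fin n)} (hS2 : 2 ≤ S.ncard)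
    (hind : ∀ s ∈ S, s + 1 ∉ S) : S ∈ minSet (cycG n) := by
  obtain ⟨s, hs⟩ : S.Nonempty := Set.nonempty_of_ncard_ne_zero (by omega)
  have hSnu : S ≠ Set.univ := by
    intro h; exact hind s hs (h ▸ Set.mem_univ _)
  have hsub : ∀ a : Fin n, a - 1 ∈ S → a ∉ S := by
    intro a h1 h2
    exact hind _ h1 (by rwa [sub_add_cancel])
  have hC1 : {a | a ∈ Sᶜ ∧ a - 1 ∉ Sᶜ} = (fun s => s + 1) '' S := by
    ext a
    simp only [Set.mem_setOf_eq, Set.mem_compl_iff, not_not, Set.mem_image]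
    constructor
    · rintro ⟨h1, h2⟩; exact ⟨a - 1, h2, by rw [sub_add_cancel]⟩
    · rintro ⟨t, ht, rfl⟩
      refine ⟨hind t ht, by rwa [add_sub_cancel_right]⟩
  have hcomp1 : numComp (cycG n) Sᶜ = S.ncard := by
    rw [numComp_eq_leftEnds hn ⟨s + 1, hind s hs⟩ (by
      intro h
      have : s ∈ Sᶜ := h ▸ Set.mem_univ _
      exact this hs), hC1, Set.ncard_image_of_injective _ add_one_inj']
  refine Or.inr ⟨S.ncard, hS2, ⟨s, hs⟩, hSnu, hcomp1, ?_⟩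
  intro i hi
  rw [hcomp1]
  have hC2 : {a | a ∈ Sᶜ ∪ {i} ∧ a - 1 ∉ Sᶜ ∪ {i}} = (fun s => s + 1) '' (S \ {i}) := by
    ext a
    simp only [Set.mem_setOf_eq, Set.mem_union, Set.mem_compl_iff, Set.mem_singleton_iff,
      not_or, not_not, Set.mem_image, Set.mem_diff]
    constructor
    · rintro ⟨h1, h2, h3⟩; exact ⟨a - 1, ⟨h2, h3⟩, by rw [sub_add_cancel]⟩
    · rintro ⟨t, ⟨ht, hti⟩, rfl⟩
      refine ⟨Or.inl (hind t ht), by rwa [add_sub_cancel_right], by rwa [add_sub_cancel_right]⟩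
  obtain ⟨t, ht, hti⟩ := Set.exists_ne_of_one_lt_ncard (show 1 < S.ncard by omega) i
  have hnu2 : Sᶜ ∪ {i} ≠ Set.univ := by
    intro h
    have : t ∈ Sᶜ ∪ {i} := h ▸ Set.mem_univ _
    rcases this with h' | h'
    · exact h' ht
    · exact hti h'
  rw [numComp_eq_leftEnds hn ⟨i, Or.inr rfl⟩ hnu2, hC2,
    Set.ncard_image_of_injective _ add_one_inj',
    Set.ncard_sdiff_singleton_of_mem hi]
  omega

lemma indep_of_minSet (hn : 3 ≤ n) {S : Set (Fin n)} (hS : S ∈ minSet (cycG n))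
    (hne : S.Nonempty) : ∀ s ∈ S, s + 1 ∉ S := by
  rcases hS with h0 | ⟨k, hk2, hSne, hSnu, hkeq, hmin⟩
  · exfalso; rw [h0] at hne; exact Set.not_nonempty_empty hne
  intro s hs hs1
  have hlt := hmin s hs
  have hc1 : Sᶜ.Nonempty := by
    by_contra h
    rw [Set.not_nonempty_iff_eq_empty, ← Set.compl_univ, compl_inj_iff] at h
    exact hSnu h
  have hc2 : Sᶜ ≠ Set.univ := by
    intro h
    have : s ∈ Sᶜ := h ▸ Set.mem_univ _
    exact this hs
  have hT'nu : Sᶜ ∪ {s} ≠ Set.univ := by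
    intro h
    have : s + 1 ∈ Sᶜ ∪ {s} := h ▸ Set.mem_univ _
    rcases this with h' | h'
    · exact h' hs1
    · exact self_ne_add_one hn s h'.symm
  rw [numComp_eq_leftEnds hn hc1 hc2, numComp_eq_leftEnds hn ⟨s, Or.inr rfl⟩ hT'nu] at hlt
  have hsub : {a | a ∈ Sᶜ ∧ a - 1 ∉ Sᶜ} ⊆ {a | a ∈ Sᶜ ∪ {s} ∧ a - 1 ∉ Sᶜ ∪ {s}} := by
    rintro a ⟨h1, h2⟩
    refine ⟨Or.inl h1, ?_⟩
    simp only [Set.mem_union, Set.mem_singleton_iff, not_or]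
    refine ⟨h2, ?_⟩
    intro h3
    apply h1
    rw [show a = s + 1 by rw [← h3, sub_add_cancel]]
    exact hs1
  have := Set.ncard_le_ncard hsub (Set.toFinite _)
  omega

lemma not_around (hn : 3 ≤ n) {S : Set (Fin n)} (hS2 : 2 ≤ S.ncard) {x : Fin n}
    (hx : x ∈ S) : ¬ SameComp (cycG n) Sᶜ (x - 1) (x + 1) := by
  intro h
  rw [sameComp_iff_Rrel hn] at h
  obtain ⟨h1, h2, m, hm, hcase⟩ := h
  have cast_eq : ∀ (p q : ℕ), p < n → q < n → ((p:Fin n) = (q:Fin n)) → p = q := by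
    intro p q hp hq h
    have := congrArg Fin.val h
    rwa [Fin.val_cast_of_lt hp, Fin.val_cast_of_lt hq] at this
  rcases hcase with ⟨heq, harc⟩ | ⟨heq, harc⟩
  · -- (x-1) + m = x + 1 : m = 2
    have hm2 : (m : Fin n) = ((2:ℕ) : Fin n) := by
      have : (x - 1) + (m : Fin n) = (x-1) + ((2:ℕ):Fin n) := by
        rw [heq]; push_cast; ring
      exact add_left_cancel this
    have : m = 2 := cast_eq m 2 hm (by omega) hm2
    subst this
    have := harc 1 (by omega)
    rw [show (x - 1) + ((1:ℕ):Fin n) = x by push_cast; ring] at this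
    exact this hx
  · -- (x+1) + m = x - 1 : m = n - 2
    have hm2 : (m : Fin n) = ((n - 2 : ℕ) : Fin n) := by
      have e1 : ((n - 2 : ℕ) : Fin n) = 0 - 2 := by
        rw [Nat.cast_sub (by omega)]
        rw [Fin.natCast_self]; push_cast; ring
      have : (x + 1) + (m : Fin n) = (x + 1) + ((n-2:ℕ):Fin n) := by
        rw [heq, e1]; ring
      exact add_left_cancel this
    have hmval : m = n - 2 := cast_eq m (n-2) hm (by omega) hm2
    obtain ⟨t, ht, htx⟩ := Set.exists_ne_of_one_lt_ncard (show 1 < S.ncard by omega) x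
    set i := (t - (x+1)).val with hi
    have hin : i < n := (t - (x+1)).isLt
    have hine : i ≠ n - 1 := by
      intro h
      apply htx
      have : t - (x + 1) = ((n-1 : ℕ) : Fin n) := by
        rw [← h, hi, Fin.cast_val_eq_self]
      have e1 : ((n - 1 : ℕ) : Fin n) = 0 - 1 := by
        rw [Nat.cast_sub (by omega), Fin.natCast_self]; push_cast; ring
      have : t = x + 1 + (0 - 1) := by
        rw [← e1, ← this]; ring
      rw [this]; ring
    have := harc i (by omega)
    rw [hi, Fin.cast_val_eq_self] at this
    rw [show x + 1 + (t - (x + 1)) = t by ring] at this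
    exact this ht
end Part3

section Part4
variable [NeZero n]

lemma fin2ne0 (hn : 3 ≤ n) : ((2:ℕ) : Fin n) ≠ 0 := by
  intro h
  have := congrArg Fin.val h
  rw [Fin.val_cast_of_lt (by omega)] at this
  simp at this

lemma sub_ne_add (hn : 3 ≤ n) (v : Fin n) : v + 1 ≠ v - 1 := by
  intro h
  apply fin2ne0 hn
  have : v + 1 - (v - 1) = 0 := by rw [h]; ring
  rw [show v + 1 - (v-1) = ((2:ℕ):Fin n) by push_cast; ring] at this
  exact this

lemma pair_of {e : Finset (Fin n)} {a b : Fin n} (hsz : e.card = 1 ∨ e.card = 2)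
    (ha : a ∈ e) (hb : b ∈ e) (hab : a ≠ b) : e = {a, b} := by
  have hsub : ({a, b} : Finset (Fin n)) ⊆ e := by
    intro z hz
    rcases Finset.mem_insert.mp hz with rfl | hz
    · exact ha
    · rw [Finset.mem_singleton.mp hz]; exact hb
  refine (Finset.eq_of_subset_of_card_le hsub ?_).symm
  rw [Finset.card_pair hab]
  rcases hsz with h | h <;> omega

lemma avoidB1 {S : Set (Fin n)} {v a : Fin n} {m : ℕ}
    (ha : a ∉ S) (harc : arcN (insert v (S \ {v+1}))ᶜ a m) : arcN Sᶜ a m := by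
  intro i hi
  have h := harc i hi
  simp only [Set.mem_compl_iff, Set.mem_insert_iff, Set.mem_diff, Set.mem_singleton_iff,
    not_or, not_and, not_not] at h
  simp only [Set.mem_compl_iff]
  intro hmem
  have hvi : a + (i : Fin n) = v + 1 := h.2 hmem
  by_cases h0 : i = 0
  · subst h0; apply ha; rwa [show a + ((0:ℕ):Fin n) = a by push_cast; ring] at hmem
  obtain ⟨j, rfl⟩ : ∃ j, i = j + 1 := ⟨i - 1, by omega⟩
  have h' := harc j (by omega)
  simp only [Set.mem_compl_iff, Set.mem_insert_iff, Set.mem_diff, Set.mem_singleton_iff,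
    not_or, not_and, not_not] at h'
  apply h'.1
  have : a + ((j:ℕ):Fin n) + 1 = v + 1 := by rw [← hvi]; push_cast; ring
  exact add_right_cancel this

lemma avoidB2 {S : Set (Fin n)} {v a b : Fin n} {m : ℕ}
    (hb : b ∉ S) (heq : a + (m : Fin n) = b)
    (harc : arcN (insert v (S \ {v-1}))ᶜ a m) : arcN Sᶜ a m := by
  intro i hi
  have h := harc i hi
  simp only [Set.mem_compl_iff, Set.mem_insert_iff, Set.mem_diff, Set.mem_singleton_iff,
    not_or, not_and, not_not] at h
  simp only [Set.mem_compl_iff]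
  intro hmem
  have hvi : a + (i : Fin n) = v - 1 := h.2 hmem
  by_cases hm0 : i = m
  · subst hm0; rw [heq] at hmem; exact hb hmem
  have h' := harc (i+1) (by omega)
  simp only [Set.mem_compl_iff, Set.mem_insert_iff, Set.mem_diff, Set.mem_singleton_iff,
    not_or, not_and, not_not] at h'
  apply h'.1
  rw [show a + ((i+1:ℕ):Fin n) = a + ((i:ℕ):Fin n) + 1 by push_cast; ring, hvi]
  ring

lemma avoidC {S : Set (Fin n)} {v a b : Fin n} {m : ℕ}
    (ha : a ∉ S) (hb : b ∉ S) (heq : a + (m : Fin n) = b)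
    (harc : arcN (insert v (S \ {v-1, v+1}))ᶜ a m) : arcN Sᶜ a m := by
  intro i hi
  have h := harc i hi
  simp only [Set.mem_compl_iff, Set.mem_insert_iff, Set.mem_diff, Set.mem_singleton_iff,
    not_or, not_and, not_not] at h
  simp only [Set.mem_compl_iff]
  intro hmem
  by_cases hvi : a + (i:Fin n) = v - 1
  · -- a + i = v - 1
    by_cases hm0 : i = m
    · subst hm0; rw [heq] at hmem; exact hb hmem
    have h' := harc (i+1) (by omega)
    simp only [Set.mem_compl_iff, Set.mem_insert_iff, Set.mem_diff, Set.mem_singleton_iff,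
      not_or, not_and, not_not] at h'
    apply h'.1
    rw [show a + ((i+1:ℕ):Fin n) = a + ((i:ℕ):Fin n) + 1 by push_cast; ring, hvi]
    ring
  · -- a + i = v + 1
    have hvi2 : a + (i:Fin n) = v + 1 := h.2 hmem hvi
    by_cases h0 : i = 0
    · subst h0; apply ha; rwa [show a + ((0:ℕ):Fin n) = a by push_cast; ring] at hmem
    obtain ⟨j, rfl⟩ : ∃ j, i = j + 1 := ⟨i - 1, by omega⟩
    have h' := harc j (by omega)
    simp only [Set.mem_compl_iff, Set.mem_insert_iff, Set.mem_diff, Set.mem_singleton_iff,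
      not_or, not_and, not_not] at h'
    apply h'.1
    have : a + ((j:ℕ):Fin n) + 1 = v + 1 := by rw [← hvi2]; push_cast; ring
    exact add_right_cancel this

lemma splitArc (hn : 3 ≤ n) {S : Set (Fin n)} {x a b : Fin n} {m : ℕ}
    (hx : x ∈ S) (ha : a ∉ S) (hb : b ∉ S) (hm : m < n) (heq : a + (m:Fin n) = b)
    (harc : arcN ((S \ {x})ᶜ) a m)
    (hnot : ¬ SameComp (cycG n) Sᶜ a b) :
    SameComp (cycG n) Sᶜ a (x - 1) ∧ SameComp (cycG n) Sᶜ (x + 1) b := by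
  have hmem' : ∀ i ≤ m, a + (i:Fin n) ∉ S ∨ a + (i:Fin n) = x := by
    intro i hi
    have h := harc i hi
    simp only [Set.mem_compl_iff, Set.mem_diff, Set.mem_singleton_iff, not_and, not_not] at h
    by_cases hs : a + (i:Fin n) ∈ S
    · exact Or.inr (h hs)
    · exact Or.inl hs
  by_cases hex : ∃ i ≤ m, a + (i:Fin n) = x
  · obtain ⟨i, hi, hix⟩ := hex
    have hi0 : i ≠ 0 := by
      intro h0; subst h0
      rw [show a + ((0:ℕ):Fin n) = a by push_cast; ring] at hix
      exact ha (hix ▸ hx)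
    have him : i ≠ m := by
      intro h0; subst h0
      rw [heq] at hix
      exact hb (hix ▸ hx)
    have huniq : ∀ j ≤ m, j ≠ i → a + (j:Fin n) ≠ x := by
      intro j hj hji hjx
      apply hji
      have : (j : Fin n) = (i : Fin n) := add_left_cancel (hjx.trans hix.symm)
      have := congrArg Fin.val this
      rwa [Fin.val_cast_of_lt (by omega), Fin.val_cast_of_lt (by omega)] at this
    constructor
    · -- a to x - 1
      rw [sameComp_iff_Rrel hn]
      have arc1 : arcN Sᶜ a (i - 1) := by
        intro j hj
        rcases hmem' j (by omega) with h | h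
        · exact h
        · exact absurd h (huniq j (by omega) (by omega))
      have end1 : a + ((i-1:ℕ):Fin n) = x - 1 := by
        have : a + ((i-1:ℕ):Fin n) + 1 = x := by
          rw [← hix, Nat.cast_sub (by omega : 1 ≤ i)]
          push_cast; ring
        rw [← this]; ring
      exact ⟨ha, end1 ▸ arc1 (i-1) le_rfl, i - 1, by omega, Or.inl ⟨end1, arc1⟩⟩
    · -- x + 1 to b
      rw [sameComp_iff_Rrel hn]
      have key : ∀ j ≤ m - (i+1), (x+1) + (j : Fin n) = a + ((i+1+j : ℕ) : Fin n) := by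
        intro j hj
        rw [← hix]; push_cast; ring
      have arc2 : arcN Sᶜ (x+1) (m - (i+1)) := by
        intro j hj
        rw [key j hj]
        rcases hmem' (i+1+j) (by omega) with h | h
        · exact h
        · exact absurd h (huniq (i+1+j) (by omega) (by omega))
      have end2 : (x+1) + ((m - (i+1) : ℕ):Fin n) = b := by
        rw [key (m - (i+1)) le_rfl, show i+1+(m-(i+1)) = m by omega, heq]
      refine ⟨?_, end2 ▸ arc2 (m - (i+1)) le_rfl, m - (i+1), by omega, Or.inl ⟨end2, arc2⟩⟩
      have := arc2 0 (by omega)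
      rwa [show (x+1) + ((0:ℕ):Fin n) = x + 1 by push_cast; ring] at this
  · exfalso
    push_neg at hex
    apply hnot
    rw [sameComp_iff_Rrel hn]
    have arcF : arcN Sᶜ a m := by
      intro i hi
      rcases hmem' i hi with h | h
      · exact h
      · exact absurd h (hex i hi)
    exact ⟨ha, hb, m, hm, Or.inl ⟨heq, arcF⟩⟩

lemma sameComp_univ (hn : 3 ≤ n) (u w : Fin n) :
    SameComp (cycG n) (∅ : Set (Fin n))ᶜ u w := by
  rw [sameComp_iff_Rrel hn]
  refine ⟨by simp, by simp, (w - u).val, (w-u).isLt, Or.inl ⟨?_, fun i _ => by simp⟩⟩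
  rw [Fin.cast_val_eq_self]; ring

lemma depM_cases (hn : 3 ≤ n) {S S' : Set (Fin n)} {e : Finset (Fin n)}
    (hsz : e.card = 1 ∨ e.card = 2)
    (hnd : ¬ depM (cycG n) S ↑e) (hd : depM (cycG n) S' ↑e) :
    (∃ v, v ∈ e ∧ v ∈ S' ∧ v ∉ S) ∨
      (∃ a b, a ∈ e ∧ b ∈ e ∧ a ≠ b ∧ SameComp (cycG n) S'ᶜ a b) := by
  rcases hd with ⟨v, hv1, hv2⟩ | ⟨a, b, ha, hb, hab, hsc⟩ | h3
  · left
    refine ⟨v, Finset.mem_coe.mp hv1, hv2, fun hvS => hnd (Or.inl ⟨v, hv1, hvS⟩)⟩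
  · exact Or.inr ⟨a, b, Finset.mem_coe.mp ha, Finset.mem_coe.mp hb, hab, hsc⟩
  · exfalso
    rw [Set.ncard_coe_finset] at h3
    omega
end Part4

theorem stmt5' {n : ℕ} [NeZero n] (hn : 3 ≤ n) (S : Set (Fin n))
    (hS : S ∈ minSet (cycG n)) (hcard : 3 ≤ S.ncard)
    (A : Finset (Finset (Fin n)))
    (hsize : ∀ e ∈ A, e.card = 1 ∨ e.card = 2)
    (hout : ∀ e ∈ A, ¬ depM (cycG n) S ↑e) :
    (∀ S' ∈ minSet (cycG n), S' ≠ S → ∃ e ∈ A, depM (cycG n) S' ↑e) ↔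
      ((⋃ e ∈ A, (e : Set (Fin n))) = Sᶜ ∧
        ∀ x ∈ S, ∃ u w : Fin n, SameComp (cycG n) Sᶜ u (x - 1) ∧
          SameComp (cycG n) Sᶜ w (x + 1) ∧ ({u, w} : Finset (Fin n)) ∈ A) := by
  have hSne : S.Nonempty := Set.nonempty_of_ncard_ne_zero (by omega)
  have hind : ∀ s ∈ S, s + 1 ∉ S := indep_of_minSet hn hS hSne
  have hsub1 : ∀ x ∈ S, x - 1 ∉ S := fun x hx h1 => hind _ h1 (by rwa [sub_add_cancel])
  constructor
  · intro hT
    constructor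
    · apply Set.Subset.antisymm
      · intro v hv
        simp only [Set.mem_iUnion] at hv
        obtain ⟨e, he, hve⟩ := hv
        simp only [Set.mem_compl_iff]
        intro hvS
        exact hout e he (Or.inl ⟨v, hve, hvS⟩)
      · intro v hv
        simp only [Set.mem_compl_iff] at hv
        have process : ∀ S'' : Set (Fin n), S'' ∈ minSet (cycG n) → S'' ≠ S →
            (∀ e ∈ A, depM (cycG n) S'' ↑e → v ∈ e) →
            v ∈ ⋃ e ∈ A, (e : Set (Fin n)) := by
          intro S'' h1 h2 h3
          obtain ⟨e, he, hd⟩ := hT S'' h1 h2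
          simp only [Set.mem_iUnion]
          exact ⟨e, he, h3 e he hd⟩
        by_cases hv1 : v - 1 ∈ S <;> by_cases hv2 : v + 1 ∈ S
        · -- Case C : both neighbours in S
          apply process (insert v (S \ {v-1, v+1}))
          · apply minSet_of_indep hn
            · have hm21 : v + 1 ∈ S \ {v-1} :=
                ⟨hv2, by simp only [Set.mem_singleton_iff]; exact sub_ne_add hn v⟩
              rw [Set.ncard_insert_of_notMem (fun h => hv h.1) (Set.toFinite _),
                show S \ {v-1, v+1} = (S \ {v-1}) \ {v+1} by
                  rw [Set.diff_diff, Set.singleton_union],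
                Set.ncard_sdiff_singleton_of_mem hm21,
                Set.ncard_sdiff_singleton_of_mem hv1]
              omega
            · intro s hs hs1
              rcases Set.mem_insert_iff.mp hs with rfl | hs
              · rcases Set.mem_insert_iff.mp hs1 with h' | h'
                · exact self_ne_add_one hn s h'.symm
                · exact h'.2 (Or.inr rfl)
              · rcases Set.mem_insert_iff.mp hs1 with h' | h'
                · exact hs.2 (Or.inl (eq_sub_of_add_eq h'))
                · exact hind s hs.1 h'.1
          · intro h; exact hv (h ▸ Set.mem_insert v _)
          · intro e he hd
            have hnd := hout e he
            rcases depM_cases hn (hsize e he) hnd hd with ⟨u, hue, huS'', huS⟩ |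
              ⟨a, b, hae, hbe, hab, hsc⟩
            · rcases Set.mem_insert_iff.mp huS'' with rfl | h'
              · exact hue
              · exact absurd h'.1 huS
            · exfalso
              have haS : a ∉ S := fun h => hnd (Or.inl ⟨a, Finset.mem_coe.mpr hae, h⟩)
              have hbS : b ∉ S := fun h => hnd (Or.inl ⟨b, Finset.mem_coe.mpr hbe, h⟩)
              rw [sameComp_iff_Rrel hn] at hsc
              obtain ⟨_, _, m, hm, hc⟩ := hsc
              apply hnd
              refine Or.inr (Or.inl ⟨a, b, Finset.mem_coe.mpr hae, Finset.mem_coe.mpr hbe, hab,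
                (sameComp_iff_Rrel hn).mpr ⟨haS, hbS, m, hm, ?_⟩⟩)
              rcases hc with ⟨heq, harc⟩ | ⟨heq, harc⟩
              · exact Or.inl ⟨heq, avoidC haS hbS heq harc⟩
              · exact Or.inr ⟨heq, avoidC hbS haS heq harc⟩
        · -- Case B2 : v - 1 ∈ S, v + 1 ∉ S
          apply process (insert v (S \ {v-1}))
          · apply minSet_of_indep hn
            · rw [Set.ncard_insert_of_notMem (fun h => hv h.1) (Set.toFinite _),
                Set.ncard_sdiff_singleton_of_mem hv1]
              omega
            · intro s hs hs1
              rcases Set.mem_insert_iff.mp hs with rfl | hs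
              · rcases Set.mem_insert_iff.mp hs1 with h' | h'
                · exact self_ne_add_one hn s h'.symm
                · exact hv2 h'.1
              · rcases Set.mem_insert_iff.mp hs1 with h' | h'
                · exact hs.2 (eq_sub_of_add_eq h')
                · exact hind s hs.1 h'.1
          · intro h; exact hv (h ▸ Set.mem_insert v _)
          · intro e he hd
            have hnd := hout e he
            rcases depM_cases hn (hsize e he) hnd hd with ⟨u, hue, huS'', huS⟩ |
              ⟨a, b, hae, hbe, hab, hsc⟩
            · rcases Set.mem_insert_iff.mp huS'' with rfl | h'
              · exact hue
              · exact absurd h'.1 huS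
            · exfalso
              have haS : a ∉ S := fun h => hnd (Or.inl ⟨a, Finset.mem_coe.mpr hae, h⟩)
              have hbS : b ∉ S := fun h => hnd (Or.inl ⟨b, Finset.mem_coe.mpr hbe, h⟩)
              rw [sameComp_iff_Rrel hn] at hsc
              obtain ⟨_, _, m, hm, hc⟩ := hsc
              apply hnd
              refine Or.inr (Or.inl ⟨a, b, Finset.mem_coe.mpr hae, Finset.mem_coe.mpr hbe, hab,
                (sameComp_iff_Rrel hn).mpr ⟨haS, hbS, m, hm, ?_⟩⟩)
              rcases hc with ⟨heq, harc⟩ | ⟨heq, harc⟩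
              · exact Or.inl ⟨heq, avoidB2 hbS heq harc⟩
              · exact Or.inr ⟨heq, avoidB2 haS heq harc⟩
        · -- Case B1 : v - 1 ∉ S, v + 1 ∈ S
          apply process (insert v (S \ {v+1}))
          · apply minSet_of_indep hn
            · rw [Set.ncard_insert_of_notMem (fun h => hv h.1) (Set.toFinite _),
                Set.ncard_sdiff_singleton_of_mem hv2]
              omega
            · intro s hs hs1
              rcases Set.mem_insert_iff.mp hs with rfl | hs
              · rcases Set.mem_insert_iff.mp hs1 with h' | h'
                · exact self_ne_add_one hn s h'.symm
                · exact h'.2 rfl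
              · rcases Set.mem_insert_iff.mp hs1 with h' | h'
                · exact hv1 (eq_sub_of_add_eq h' ▸ hs.1)
                · exact hind s hs.1 h'.1
          · intro h; exact hv (h ▸ Set.mem_insert v _)
          · intro e he hd
            have hnd := hout e he
            rcases depM_cases hn (hsize e he) hnd hd with ⟨u, hue, huS'', huS⟩ |
              ⟨a, b, hae, hbe, hab, hsc⟩
            · rcases Set.mem_insert_iff.mp huS'' with rfl | h'
              · exact hue
              · exact absurd h'.1 huS
            · exfalso
              have haS : a ∉ S := fun h => hnd (Or.inl ⟨a, Finset.mem_coe.mpr hae, h⟩)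
              have hbS : b ∉ S := fun h => hnd (Or.inl ⟨b, Finset.mem_coe.mpr hbe, h⟩)
              rw [sameComp_iff_Rrel hn] at hsc
              obtain ⟨_, _, m, hm, hc⟩ := hsc
              apply hnd
              refine Or.inr (Or.inl ⟨a, b, Finset.mem_coe.mpr hae, Finset.mem_coe.mpr hbe, hab,
                (sameComp_iff_Rrel hn).mpr ⟨haS, hbS, m, hm, ?_⟩⟩)
              rcases hc with ⟨heq, harc⟩ | ⟨heq, harc⟩
              · exact Or.inl ⟨heq, avoidB1 haS harc⟩
              · exact Or.inr ⟨heq, avoidB1 hbS harc⟩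
        · -- Case A : neither neighbour in S
          apply process (insert v S)
          · apply minSet_of_indep hn
            · rw [Set.ncard_insert_of_notMem hv (Set.toFinite _)]; omega
            · intro s hs hs1
              rcases Set.mem_insert_iff.mp hs with rfl | hs
              · rcases Set.mem_insert_iff.mp hs1 with h' | h'
                · exact self_ne_add_one hn s h'.symm
                · exact hv2 h'
              · rcases Set.mem_insert_iff.mp hs1 with h' | h'
                · exact hv1 (eq_sub_of_add_eq h' ▸ hs)
                · exact hind s hs h'
          · intro h; exact hv (h ▸ Set.mem_insert v _)
          · intro e he hd
            have hnd := hout e he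
            rcases depM_cases hn (hsize e he) hnd hd with ⟨u, hue, huS'', huS⟩ |
              ⟨a, b, hae, hbe, hab, hsc⟩
            · rcases Set.mem_insert_iff.mp huS'' with rfl | h'
              · exact hue
              · exact absurd h' huS
            · exfalso
              apply hnd
              exact Or.inr (Or.inl ⟨a, b, Finset.mem_coe.mpr hae, Finset.mem_coe.mpr hbe, hab,
                sameComp_mono hn (Set.compl_subset_compl.mpr (Set.subset_insert v S)) hsc⟩)
    · -- pair condition
      intro x hx
      have hmem : S \ {x} ∈ minSet (cycG n) := by
        apply minSet_of_indep hn
        · rw [Set.ncard_sdiff_singleton_of_mem hx]; omega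
        · intro s hs hs1; exact hind s hs.1 hs1.1
      have hne : S \ {x} ≠ S := by
        intro h
        have : x ∈ S \ {x} := h.symm ▸ hx
        exact this.2 rfl
      obtain ⟨e, he, hd⟩ := hT (S \ {x}) hmem hne
      have hnd := hout e he
      rcases depM_cases hn (hsize e he) hnd hd with ⟨u, hue, huS'', huS⟩ |
        ⟨a, b, hae, hbe, hab, hsc⟩
      · exact absurd huS''.1 huS
      · have haS : a ∉ S := fun h => hnd (Or.inl ⟨a, Finset.mem_coe.mpr hae, h⟩)
        have hbS : b ∉ S := fun h => hnd (Or.inl ⟨b, Finset.mem_coe.mpr hbe, h⟩)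
        rw [sameComp_iff_Rrel hn] at hsc
        obtain ⟨_, _, m, hm, hc⟩ := hsc
        rcases hc with ⟨heq, harc⟩ | ⟨heq, harc⟩
        · have hnot : ¬ SameComp (cycG n) Sᶜ a b := fun h =>
            hnd (Or.inr (Or.inl ⟨a, b, Finset.mem_coe.mpr hae, Finset.mem_coe.mpr hbe, hab, h⟩))
          obtain ⟨h1, h2⟩ := splitArc hn hx haS hbS hm heq harc hnot
          exact ⟨a, b, h1, sameComp_symm h2, by rwa [← pair_of (hsize e he) hae hbe hab]⟩
        · have hnot : ¬ SameComp (cycG n) Sᶜ b a := fun h =>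
            hnd (Or.inr (Or.inl ⟨b, a, Finset.mem_coe.mpr hbe, Finset.mem_coe.mpr hae,
              hab.symm, h⟩))
          obtain ⟨h1, h2⟩ := splitArc hn hx hbS haS hm heq harc hnot
          exact ⟨b, a, h1, sameComp_symm h2, by rwa [← pair_of (hsize e he) hbe hae hab.symm]⟩
  · rintro ⟨hU, hP⟩ S' hS' hneq
    have hd2 : ∀ x ∈ S, ∀ u w : Fin n, SameComp (cycG n) Sᶜ u (x-1) →
        SameComp (cycG n) Sᶜ w (x+1) → u ≠ w := by
      intro x hx u w h1 h2 heq
      subst heq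
      exact not_around hn (by omega) hx (sameComp_trans (sameComp_symm h1) h2)
    rcases hS' with h0 | hcut
    · subst h0
      obtain ⟨x, hx⟩ := hSne
      obtain ⟨u, w, h1, h2, hA⟩ := hP x hx
      exact ⟨{u, w}, hA, Or.inr (Or.inl ⟨u, w, by simp, by simp, hd2 x hx u w h1 h2,
        sameComp_univ hn u w⟩)⟩
    · by_cases hssub : S' ⊆ S
      · have hxex : ∃ x ∈ S, x ∉ S' := by
          by_contra h; push_neg at h
          exact hneq (Set.Subset.antisymm hssub h)
        obtain ⟨x, hx, hxS'⟩ := hxex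
        obtain ⟨u, w, h1, h2, hA⟩ := hP x hx
        have hcompl : Sᶜ ⊆ S'ᶜ := Set.compl_subset_compl.mpr hssub
        have bridge : SameComp (cycG n) S'ᶜ (x-1) (x+1) := by
          rw [sameComp_iff_Rrel hn]
          refine ⟨hcompl (hsub1 x hx), hcompl (hind x hx), 2, by omega,
            Or.inl ⟨by push_cast; ring, ?_⟩⟩
          intro i hi; interval_cases i
          · simpa using hcompl (hsub1 x hx)
          · rw [show (x-1) + ((1:ℕ):Fin n) = x by push_cast; ring]; exact hxS'
          · rw [show (x-1) + ((2:ℕ):Fin n) = x+1 by push_cast; ring]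
            exact hcompl (hind x hx)
        exact ⟨{u, w}, hA, Or.inr (Or.inl ⟨u, w, by simp, by simp, hd2 x hx u w h1 h2,
          sameComp_trans (sameComp_trans (sameComp_mono hn hcompl h1) bridge)
            (sameComp_symm (sameComp_mono hn hcompl h2))⟩)⟩
      · obtain ⟨v, hvS', hvS⟩ := Set.not_subset.mp hssub
        have hv : v ∈ ⋃ e ∈ A, (e : Set (Fin n)) := by rw [hU]; exact hvS
        simp only [Set.mem_iUnion] at hv
        obtain ⟨e, he, hve⟩ := hv
        exact ⟨e, he, Or.inl ⟨v, hve, hvS'⟩⟩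

end AuxStmt5

/-- characterization of transversals for the cycle graph. -/
theorem stmt5 {n : ℕ} [NeZero n] (hn : 3 ≤ n) (S : Set (Fin n))
    (hS : S ∈ minSet (cycG n)) (hcard : 3 ≤ S.ncard)
    (A : Finset (Finset (Fin n)))
    (hsize : ∀ e ∈ A, e.card = 1 ∨ e.card = 2)
    (hout : ∀ e ∈ A, ¬ depM (cycG n) S ↑e) :
    (∀ S' ∈ minSet (cycG n), S' ≠ S → ∃ e ∈ A, depM (cycG n) S' ↑e) ↔
      ((⋃ e ∈ A, (e : Set (Fin n))) = Sᶜ ∧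
        ∀ x ∈ S, ∃ u w : Fin n, SameComp (cycG n) Sᶜ u (x - 1) ∧
          SameComp (cycG n) Sᶜ w (x + 1) ∧ ({u, w} : Finset (Fin n)) ∈ A) :=
  stmt5' hn S hS hcard A hsize hout
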